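/- arXiv:0810.4101 — 2 statements merged into one kernel-verified Lean document; each statement's English description precedes it below -/
import Mathlib

section
/- For μ > 0, γ ∈ ℝ, 0 < α < π/2, and 0 < δ < π/2 − α, every point of the curve T(x) = μ(1 − sin(α + ix)) + γ, x ∈ ℝ, lies in the sector {z ∈ ℂ : |arg(z − γ)| < π − δ}. -/
open Real

lemma stmt_12_aux (s c ch sh r i A : ℝ) (hs : 0 < s) (hc : 0 < c)
    (hsc : s ^ 2 + c ^ 2 = 1) (hch : 1 ≤ ch) (hch2 : ch ^ 2 - sh ^ 2 = 1)
    (hchle : ch ≤ 1 + |sh|) (hr : r = 1 - s * ch) (hi : i = -(c * sh))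
    (hA0 : 0 ≤ A) (hAsq : A ^ 2 = r ^ 2 + i ^ 2) : -s * A ≤ r := by
  rcases le_or_gt 0 r with h | h
  · nlinarith
  · have h1 : s * ch - 1 ≤ s * |sh| := by nlinarith
  /- (s ch - 1)^2 ≤ s^2 sh^2 -/
    have h1' : (s * ch - 1) ^ 2 ≤ s ^ 2 * sh ^ 2 := by
      have h0 : 0 ≤ s * ch - 1 := by rw [hr] at h; linarith
      nlinarith [sq_abs sh, mul_self_le_mul_self h0 h1]
    have h2 : c ^ 2 * r ^ 2 ≤ s ^ 2 * i ^ 2 := by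
      rw [hr, hi]
      nlinarith [mul_le_mul_of_nonneg_left h1' (sq_nonneg c)]
    have h3 : r ^ 2 ≤ s ^ 2 * A ^ 2 := by nlinarith [sq_nonneg r, sq_nonneg i]
    nlinarith [mul_nonneg hs.le hA0, sq_nonneg (s * A + r)]


theorem stmt_12 (μ γ α δ : ℝ) (hμ : 0 < μ) (hα0 : 0 < α) (hα : α < π / 2)
    (hδ0 : 0 < δ) (hδ : δ < π / 2 - α)
    (T : ℝ → ℂ) (hT : ∀ x : ℝ, T x = (μ:ℂ) * (1 - Complex.sin ((α:ℂ) + x * Complex.I)) + γ) :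
    ∀ x : ℝ, |(T x - (γ:ℂ)).arg| < π - δ := by
  intro x
  have hTx : T x - (γ:ℂ) = (μ:ℂ) * (1 - Complex.sin ((α:ℂ) + x * Complex.I)) := by
    rw [hT]; ring
  set z : ℂ := 1 - Complex.sin ((α:ℂ) + x * Complex.I) with hzdef
  have harg : (T x - (γ:ℂ)).arg = z.arg := by
    rw [hTx, Complex.arg_real_mul _ hμ]
  rw [harg]
  -- compute re and im of z
  have hsin : Complex.sin ((α:ℂ) + x * Complex.I)
      = Real.sin α * Real.cosh x + Real.cos α * Real.sinh x * Complex.I := by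
    rw [Complex.sin_add_mul_I]
    push_cast [Complex.ofReal_sin, Complex.ofReal_cos, Complex.ofReal_cosh, Complex.ofReal_sinh]
    norm_num
  have hre : z.re = 1 - Real.sin α * Real.cosh x := by
    rw [hzdef, hsin]
    simp [Complex.sin_ofReal_re, Complex.cos_ofReal_re]
  have him : z.im = -(Real.cos α * Real.sinh x) := by
    rw [hzdef, hsin]
    simp [Complex.sin_ofReal_re, Complex.cos_ofReal_re, Complex.sinh_ofReal_re]
  clear hzdef hsin hTx hT
  clear_value z
  have hs : 0 < Real.sin α := Real.sin_pos_of_pos_of_lt_pi hα0 (by linarith [Real.pi_pos])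
  have hc : 0 < Real.cos α := Real.cos_pos_of_mem_Ioo ⟨by linarith, hα⟩
  have hsc : Real.sin α ^ 2 + Real.cos α ^ 2 = 1 := Real.sin_sq_add_cos_sq α
  have hs1 : Real.sin α ≤ 1 := Real.sin_le_one α
  have hch : 1 ≤ Real.cosh x := Real.one_le_cosh x
  have hch2 : Real.cosh x ^ 2 - Real.sinh x ^ 2 = 1 := Real.cosh_sq_sub_sinh_sq x
  have hchle : Real.cosh x ≤ 1 + |Real.sinh x| := by
    nlinarith [abs_nonneg (Real.sinh x), sq_abs (Real.sinh x)]
  have hA : 0 ≤ ‖z‖ := norm_nonneg z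
  have hA2 : (‖z‖) ^ 2 = z.re ^ 2 + z.im ^ 2 := by
    rw [Complex.sq_norm, Complex.normSq_apply]; ring
  have hkey : -(Real.sin α) * ‖z‖ ≤ z.re :=
    stmt_12_aux (Real.sin α) (Real.cos α) (Real.cosh x) (Real.sinh x) z.re z.im
      (‖z‖) hs hc hsc hch hch2 hchle hre him hA hA2
  have hz0 : z ≠ 0 := by
    intro h0
    have h1 : (0:ℝ) = 1 - Real.sin α * Real.cosh x := by rw [← hre, h0]; simp
    have h2 : Real.cos α * Real.sinh x = 0 := by
      have : (0:ℝ) = -(Real.cos α * Real.sinh x) := by rw [← him, h0]; simp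
      linarith
    rcases mul_eq_zero.1 h2 with h | h
    · linarith
    · nlinarith
  have hcosarg : Real.cos z.arg = z.re / ‖z‖ := Complex.cos_arg hz0
  have hApos : 0 < ‖z‖ := norm_pos_iff.mpr hz0
  have hcosge : Real.cos (π/2 + α) ≤ Real.cos z.arg := by
    have hc2 : Real.cos (π/2 + α) = -Real.sin α := by
      rw [Real.cos_add]; simp
    rw [hc2, hcosarg, le_div_iff₀ hApos]
    linarith [hkey]
  have hbound : |z.arg| ≤ π/2 + α := by
    by_contra hcon
    push_neg at hcon
    have h1 : |z.arg| ≤ π := Complex.abs_arg_le_pi z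
    have h2 : Real.cos |z.arg| < Real.cos (π/2 + α) := by
      apply Real.cos_lt_cos_of_nonneg_of_le_pi (by positivity) h1 hcon
    rw [Real.cos_abs] at h2
    linarith
  linarith
end

section
/- For t > 0, γ ∈ ℝ, ν ≥ 1, M > 0, and a function F analytic on the sector |arg(z − γ)| < π − δ (0 < δ < π/2) with ‖F(z)‖ ≤ M/|z−γ|^ν there, the integral (1/(2πi)) ∫_Γ e^{tz} F(z) dz over the hyperbola Γ parameterized by T(x) = μ(1 − sin(α+ix)) + γ (with μ > 0 and 0 < α < π/2 − δ) converges absolutely; i.e., ∫_ℝ ‖e^{t T(x)} F(T(x)) T'(x)‖ dx < ∞. -/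
open Real MeasureTheory

lemma aux_re (μ α x : ℝ) :
    ((μ:ℂ) * (1 - Complex.sin ((α:ℂ) + x * Complex.I))).re
      = μ * (1 - Real.sin α * Real.cosh x) := by
  rw [Complex.sin_add, Complex.sin_mul_I, Complex.cos_mul_I]
  simp [← Complex.ofReal_sin, ← Complex.ofReal_cos, ← Complex.ofReal_sinh, ← Complex.ofReal_cosh]

lemma aux_im (μ α x : ℝ) :
    ((μ:ℂ) * (1 - Complex.sin ((α:ℂ) + x * Complex.I))).im
      = -(μ * Real.cos α * Real.sinh x) := by
  rw [Complex.sin_add, Complex.sin_mul_I, Complex.cos_mul_I]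
  simp [← Complex.ofReal_sin, ← Complex.ofReal_cos, ← Complex.ofReal_sinh, ← Complex.ofReal_cosh]
  ring

lemma aux_abs (μ α x : ℝ) (hμ : 0 < μ) (h1 : Real.sin α ≤ 1) :
    ‖(μ:ℂ) * (1 - Complex.sin ((α:ℂ) + x * Complex.I))‖
      = μ * (Real.cosh x - Real.sin α) := by
  rw [Complex.norm_def, Complex.normSq_apply, aux_re, aux_im]
  have h2 := Real.cosh_sq_sub_sinh_sq x
  have h3 := Real.sin_sq_add_cos_sq α
  rw [show μ * (1 - Real.sin α * Real.cosh x) * (μ * (1 - Real.sin α * Real.cosh x)) +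
      -(μ * Real.cos α * Real.sinh x) * -(μ * Real.cos α * Real.sinh x)
      = (μ * (Real.cosh x - Real.sin α))^2 by
    linear_combination (μ^2*(Real.sin α^2 - 1)) * h2 + (μ^2 * Real.sinh x^2) * h3]
  have h4 : 0 ≤ Real.cosh x - Real.sin α := by
    have := Real.one_le_cosh x; linarith
  exact Real.sqrt_sq (by positivity)

-- sin δ < cos α * sinh |x| / (cosh x - sin α)
lemma aux_sinlt (δ α x : ℝ) (hδ0 : 0 < δ) (hδ : δ < π / 2) (hα0 : 0 < α)
    (hα : α < π / 2 - δ) (h : 1 < Real.sin α * Real.cosh x) :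
    Real.sin δ < Real.cos α * Real.sinh |x| / (Real.cosh x - Real.sin α) := by
  have hp : 0 < Real.sin α := Real.sin_pos_of_pos_of_lt_pi hα0 (by linarith [Real.pi_pos])
  have hq : 0 < Real.cos α := Real.cos_pos_of_mem_Ioo ⟨by linarith, by linarith⟩
  have hp1 : Real.sin α ≤ 1 := Real.sin_le_one α
  have hc1 : 1 < Real.cosh x := by nlinarith [Real.cosh_pos (x := x)]
  have hx0 : x ≠ 0 := fun h0 => by rw [h0, Real.cosh_zero] at hc1; exact lt_irrefl 1 hc1
  have hs' : 0 < Real.sinh |x| := Real.sinh_pos_iff.mpr (abs_pos.mpr hx0)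
  have hcp : 0 < Real.cosh x - Real.sin α := by linarith
  -- exp (-|x|) ≤ sin α
  have hexp : Real.cosh x - Real.sinh |x| ≤ Real.sin α := by
    rw [← Real.cosh_abs, Real.cosh_sub_sinh]
    have h1 : Real.exp (-|x|) * Real.exp |x| = 1 := by
      rw [← Real.exp_add]; simp
    have h2 : Real.cosh |x| ≤ Real.exp |x| := by
      rw [← Real.cosh_add_sinh]; nlinarith [Real.sinh_pos_iff.mpr (abs_pos.mpr hx0)]
    rw [Real.cosh_abs] at h2
    -- sin α * cosh x > 1 and cosh x ≤ exp |x|  ⟹ exp(-|x|) ≤ sin α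
    nlinarith [Real.exp_pos (-|x|), Real.exp_pos |x|]
  have hle : Real.cosh x - Real.sin α ≤ Real.sinh |x| := by linarith
  have hq' : Real.cos α ≤ Real.cos α * Real.sinh |x| / (Real.cosh x - Real.sin α) := by
    rw [le_div_iff₀ hcp]
    nlinarith
  have : Real.sin δ < Real.cos α := by
    have := Real.cos_lt_cos_of_nonneg_of_le_pi hα0.le (by linarith [Real.pi_pos]) (by linarith : α < π/2 - δ)
    rwa [Real.cos_pi_div_two_sub] at this
  linarith

lemma aux_arg (δ μ α x : ℝ) (hδ0 : 0 < δ) (hδ : δ < π / 2) (hμ : 0 < μ)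
    (hα0 : 0 < α) (hα : α < π / 2 - δ) :
    |((μ:ℂ) * (1 - Complex.sin ((α:ℂ) + x * Complex.I))).arg| < π - δ := by
  set w : ℂ := (μ:ℂ) * (1 - Complex.sin ((α:ℂ) + x * Complex.I)) with hw
  have hp1 : Real.sin α ≤ 1 := Real.sin_le_one α
  have hq : 0 < Real.cos α := Real.cos_pos_of_mem_Ioo ⟨by linarith, by linarith⟩
  rcases le_or_gt 0 w.re with hr | hr
  · have h1 : |w.arg| ≤ π / 2 := Complex.abs_arg_le_pi_div_two_iff.mpr hr
    linarith
  · have hpc : 1 < Real.sin α * Real.cosh x := by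
      rw [hw, aux_re] at hr; nlinarith
    have hkey := aux_sinlt δ α x hδ0 hδ hα0 hα hpc
    have hcp : 0 < Real.cosh x - Real.sin α := by
      nlinarith [Real.cosh_pos (x := x)]
    have harcs : δ < Real.arcsin (Real.cos α * Real.sinh |x| / (Real.cosh x - Real.sin α)) := by
      rw [Real.lt_arcsin_iff_sin_lt' ⟨by linarith [Real.pi_pos], hδ⟩]
      exact hkey
    have harcs2 := Real.arcsin_le_pi_div_two
      (Real.cos α * Real.sinh |x| / (Real.cosh x - Real.sin α))
    rcases lt_trichotomy x 0 with hx | hx | hx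
    · have hs : Real.sinh x < 0 := Real.sinh_neg_iff.mpr hx
      have him : 0 ≤ w.im := by
        rw [hw, aux_im]; nlinarith [mul_pos (mul_pos hμ hq) (neg_pos.mpr hs)]
      have harg : w.arg = Real.arcsin ((-w).im / ‖w‖) + π :=
        Complex.arg_of_re_neg_of_im_nonneg hr him
      have hdiv : (-w).im / ‖w‖
          = -(Real.cos α * Real.sinh |x| / (Real.cosh x - Real.sin α)) := by
        rw [Complex.neg_im, hw, aux_im, aux_abs μ α x hμ hp1, abs_of_neg hx, Real.sinh_neg]
        field_simp
      rw [harg, hdiv, Real.arcsin_neg]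
      rw [abs_of_pos (by linarith [Real.pi_pos])]
      linarith
    · exfalso
      rw [hx, Real.cosh_zero, mul_one] at hpc
      linarith
    · have hs : 0 < Real.sinh x := Real.sinh_pos_iff.mpr hx
      have him : w.im < 0 := by
        rw [hw, aux_im]; nlinarith [mul_pos (mul_pos hμ hq) hs]
      have harg : w.arg = Real.arcsin ((-w).im / ‖w‖) - π :=
        Complex.arg_of_re_neg_of_im_neg hr him
      have hdiv : (-w).im / ‖w‖
          = Real.cos α * Real.sinh |x| / (Real.cosh x - Real.sin α) := by
        rw [Complex.neg_im, hw, aux_im, aux_abs μ α x hμ hp1, abs_of_pos hx]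
        field_simp
      rw [harg, hdiv]
      rw [abs_of_neg (by linarith [Real.pi_pos])]
      linarith

lemma aux_cosh_quad (x : ℝ) : 1 + x^2/2 ≤ Real.cosh x := by
  have h1 : Real.cosh x = Real.cosh (x/2)^2 + Real.sinh (x/2)^2 := by
    rw [← Real.cosh_two_mul]; ring_nf
  have h2 : Real.sinh (x/2)^2 ≥ (x/2)^2 := by
    rcases le_or_gt 0 (x/2) with h | h
    · rcases eq_or_lt_of_le h with h' | h'
      · rw [← h']; simp
      · have := Real.self_lt_sinh_iff.mpr h'
        nlinarith
    · have h3 : 0 < -(x/2) := by linarith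
      have := Real.self_lt_sinh_iff.mpr h3
      rw [Real.sinh_neg] at this
      nlinarith
  have h3 := Real.cosh_sq (x/2)
  nlinarith

-- cosh x * exp (-a * cosh x) ≤ (2/a) * exp (-(a/4) * x^2)
lemma aux_dom (a x : ℝ) (ha : 0 < a) :
    Real.cosh x * Real.exp (-a * Real.cosh x) ≤ (2/a) * Real.exp (-(a/4) * x^2) := by
  have hc := Real.one_le_cosh x
  have h1 : Real.cosh x ≤ (2/a) * Real.exp ((a/2) * Real.cosh x) := by
    have := Real.add_one_le_exp ((a/2) * Real.cosh x)
    have h2 : (a/2) * Real.cosh x ≤ Real.exp ((a/2) * Real.cosh x) := by linarith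
    calc Real.cosh x = (2/a) * ((a/2) * Real.cosh x) := by field_simp
      _ ≤ (2/a) * Real.exp ((a/2) * Real.cosh x) := by
        apply mul_le_mul_of_nonneg_left h2 (by positivity)
  have h2 : Real.exp (-(a/2) * Real.cosh x) ≤ Real.exp (-(a/4) * x^2) := by
    apply Real.exp_le_exp.mpr
    have := aux_cosh_quad x
    nlinarith
  calc Real.cosh x * Real.exp (-a * Real.cosh x)
      ≤ ((2/a) * Real.exp ((a/2) * Real.cosh x)) * Real.exp (-a * Real.cosh x) := by
        apply mul_le_mul_of_nonneg_right h1 (Real.exp_pos _).le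
    _ = (2/a) * Real.exp (-(a/2) * Real.cosh x) := by
        rw [mul_assoc, ← Real.exp_add]; ring_nf
    _ ≤ (2/a) * Real.exp (-(a/4) * x^2) := by
        apply mul_le_mul_of_nonneg_left h2 (by positivity)

lemma aux_cosabs (μ α x : ℝ) (hμ : 0 ≤ μ) :
    ‖-Complex.I * μ * Complex.cos ((α:ℂ) + x * Complex.I)‖
      ≤ 2 * μ * Real.cosh x := by
  rw [norm_mul, norm_mul]
  simp only [norm_neg, Complex.norm_I, Complex.norm_real, Real.norm_eq_abs, one_mul]
  have hb : ‖Complex.cos ((α:ℂ) + x * Complex.I)‖ ≤ 2 * Real.cosh x := by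
    refine le_trans (Complex.norm_le_abs_re_add_abs_im _) ?_
    have hre : (Complex.cos ((α:ℂ) + x * Complex.I)).re = Real.cos α * Real.cosh x := by
      rw [Complex.cos_add, Complex.sin_mul_I, Complex.cos_mul_I]
      simp [← Complex.ofReal_sin, ← Complex.ofReal_cos, ← Complex.ofReal_sinh, ← Complex.ofReal_cosh]
    have him : (Complex.cos ((α:ℂ) + x * Complex.I)).im = -(Real.sin α * Real.sinh x) := by
      rw [Complex.cos_add, Complex.sin_mul_I, Complex.cos_mul_I]
      simp [← Complex.ofReal_sin, ← Complex.ofReal_cos, ← Complex.ofReal_sinh, ← Complex.ofReal_cosh]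
    rw [hre, him, abs_neg]
    have hc : |Real.cos α * Real.cosh x| ≤ Real.cosh x := by
      rw [abs_mul, abs_of_nonneg (Real.cosh_pos (x := x)).le]
      have := Real.abs_cos_le_one α
      nlinarith [Real.cosh_pos (x := x)]
    have hs : |Real.sin α * Real.sinh x| ≤ Real.cosh x := by
      rw [abs_mul]
      have h1 := Real.abs_sin_le_one α
      have h2 : |Real.sinh x| ≤ Real.cosh x := by
        rw [Real.abs_sinh, ← Real.cosh_abs]
        exact (Real.sinh_lt_cosh _).le
      nlinarith [abs_nonneg (Real.sinh x), Real.cosh_pos (x := x)]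
    linarith
  calc |μ| * ‖Complex.cos ((α:ℂ) + x * Complex.I)‖
      ≤ |μ| * (2 * Real.cosh x) := mul_le_mul_of_nonneg_left hb (abs_nonneg μ)
    _ = 2 * μ * Real.cosh x := by rw [abs_of_nonneg hμ]; ring

theorem stmt_18 {X : Type*} [NormedAddCommGroup X] [NormedSpace ℂ X] [CompleteSpace X]
    (t γ ν M δ μ α : ℝ) (ht : 0 < t) (hν : 1 ≤ ν) (hM : 0 < M)
    (hδ0 : 0 < δ) (hδ : δ < π / 2) (hμ : 0 < μ) (hα0 : 0 < α) (hα : α < π / 2 - δ)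
    (F : ℂ → X)
    (hF : AnalyticOn ℂ F {z : ℂ | z ≠ (γ:ℂ) ∧ |(z - (γ:ℂ)).arg| < π - δ})
    (hFbound : ∀ z : ℂ, z ≠ (γ:ℂ) → |(z - (γ:ℂ)).arg| < π - δ →
      ‖F z‖ ≤ M / ‖z - (γ:ℂ)‖ ^ ν)
    (T T' : ℝ → ℂ)
    (hT : ∀ x : ℝ, T x = (μ:ℂ) * (1 - Complex.sin ((α:ℂ) + x * Complex.I)) + γ)
    (hT' : ∀ x : ℝ, T' x = -Complex.I * μ * Complex.cos ((α:ℂ) + x * Complex.I)) :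
    Integrable (fun x : ℝ => (Complex.exp ((t:ℂ) * T x) * T' x) • F (T x)) := by
  have hp : 0 < Real.sin α := Real.sin_pos_of_pos_of_lt_pi hα0 (by linarith [Real.pi_pos])
  have hq : 0 < Real.cos α := Real.cos_pos_of_mem_Ioo ⟨by linarith, by linarith⟩
  have hp1 : Real.sin α < 1 := by nlinarith [Real.sin_sq_add_cos_sq α]
  set a : ℝ := t * μ * Real.sin α with ha
  have ha0 : 0 < a := by positivity
  -- basic pointwise facts
  have hsub : ∀ x : ℝ, T x - (γ:ℂ) = (μ:ℂ) * (1 - Complex.sin ((α:ℂ) + x * Complex.I)) := by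
    intro x; rw [hT]; ring
  have habs : ∀ x : ℝ, ‖T x - (γ:ℂ)‖ = μ * (Real.cosh x - Real.sin α) := by
    intro x; rw [hsub, aux_abs μ α x hμ hp1.le]
  have habs_pos : ∀ x : ℝ, 0 < ‖T x - (γ:ℂ)‖ := by
    intro x; rw [habs]
    have := Real.one_le_cosh x
    have : 0 < Real.cosh x - Real.sin α := by linarith
    positivity
  have hne : ∀ x : ℝ, T x ≠ (γ:ℂ) := by
    intro x h
    have := habs_pos x
    rw [h, sub_self, norm_zero] at this
    exact lt_irrefl 0 this
  have harg : ∀ x : ℝ, |(T x - (γ:ℂ)).arg| < π - δ := by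
    intro x; rw [hsub]; exact aux_arg δ μ α x hδ0 hδ hμ hα0 hα
  -- continuity / measurability
  have hTc : Continuous T := by
    have hTe : T = fun x : ℝ => (μ:ℂ) * (1 - Complex.sin ((α:ℂ) + x * Complex.I)) + γ :=
      funext hT
    rw [hTe]; fun_prop
  have hT'c : Continuous T' := by
    have hT'e : T' = fun x : ℝ => -Complex.I * μ * Complex.cos ((α:ℂ) + x * Complex.I) :=
      funext hT'
    rw [hT'e]; fun_prop
  have hFc : Continuous fun x : ℝ => F (T x) :=
    hF.continuousOn.comp_continuous hTc fun x => ⟨hne x, harg x⟩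
  have hcont : Continuous fun x : ℝ => (Complex.exp ((t:ℂ) * T x) * T' x) • F (T x) := by
    exact ((Complex.continuous_exp.comp (continuous_const.mul hTc)).mul hT'c).smul hFc
  -- bound on ‖F (T x)‖
  set CM : ℝ := M / (μ * (1 - Real.sin α)) ^ ν with hCM
  have hCM0 : 0 < CM := by
    have h1 : 0 < μ * (1 - Real.sin α) := by nlinarith
    have := Real.rpow_pos_of_pos h1 ν
    positivity
  have hFb : ∀ x : ℝ, ‖F (T x)‖ ≤ CM := by
    intro x
    refine le_trans (hFbound (T x) (hne x) (harg x)) ?_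
    rw [hCM]
    have h1 : 0 < μ * (1 - Real.sin α) := by nlinarith
    have h2 : μ * (1 - Real.sin α) ≤ ‖T x - (γ:ℂ)‖ := by
      rw [habs]
      have := Real.one_le_cosh x
      nlinarith
    have h3 : (μ * (1 - Real.sin α)) ^ ν ≤ (‖T x - (γ:ℂ)‖) ^ ν :=
      Real.rpow_le_rpow h1.le h2 (by linarith)
    exact div_le_div_of_nonneg_left hM.le (Real.rpow_pos_of_pos h1 ν) h3
  -- the dominating function
  set K : ℝ := Real.exp (t * μ + t * γ) * (2 * μ) * CM * (2 / a) with hK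
  have hKint : Integrable fun x : ℝ => K * Real.exp (-(a/4) * x^2) :=
    (integrable_exp_neg_mul_sq (by positivity : (0:ℝ) < a/4)).const_mul K
  apply Integrable.mono' hKint hcont.aestronglyMeasurable
  refine ae_of_all _ fun x => ?_
  have hnorm : ‖(Complex.exp ((t:ℂ) * T x) * T' x) • F (T x)‖
      = ‖Complex.exp ((t:ℂ) * T x)‖ * ‖T' x‖ * ‖F (T x)‖ := by
    rw [norm_smul, norm_mul]
  rw [hnorm]
  -- |exp(t T x)|
  have hTre : (T x).re = μ * (1 - Real.sin α * Real.cosh x) + γ := by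
    rw [hT]; rw [Complex.add_re, aux_re]; simp
  have hexp : ‖Complex.exp ((t:ℂ) * T x)‖
      = Real.exp (t * μ + t * γ) * Real.exp (-a * Real.cosh x) := by
    rw [Complex.norm_exp, ← Real.exp_add]
    congr 1
    rw [show ((t:ℂ) * T x).re = t * (T x).re from by simp [Complex.re_ofReal_mul], hTre, ha]
    ring
  have hT'b : ‖T' x‖ ≤ 2 * μ * Real.cosh x := by
    rw [hT']; exact aux_cosabs μ α x hμ.le
  have hcosh := Real.cosh_pos (x := x)
  calc ‖Complex.exp ((t:ℂ) * T x)‖ * ‖T' x‖ * ‖F (T x)‖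
      ≤ (Real.exp (t * μ + t * γ) * Real.exp (-a * Real.cosh x)) * (2 * μ * Real.cosh x) * CM := by
        rw [hexp]
        apply mul_le_mul
        · apply mul_le_mul_of_nonneg_left (hT'b) (by positivity)
        · exact hFb x
        · exact norm_nonneg _
        · positivity
    _ = (Real.exp (t * μ + t * γ) * (2 * μ) * CM) * (Real.cosh x * Real.exp (-a * Real.cosh x)) := by
        ring
    _ ≤ (Real.exp (t * μ + t * γ) * (2 * μ) * CM) * ((2/a) * Real.exp (-(a/4) * x^2)) := by
        apply mul_le_mul_of_nonneg_left (aux_dom a x ha0) (by positivity)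
    _ = K * Real.exp (-(a/4) * x^2) := by rw [hK]; ring
end
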